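/- For all γ ∈ (0,1) and integers k ≥ 3, r ≥ 1 with α = 2r/k, the function s(γ) = (1 − kα)(ln 2 + h(γ)) + α ln f(t₁,t₂,t₃) − r(1−γ)(ln t₁ + ln t₃) − rγ ln t₂ (where (t₁,t₂,t₃) solves the saddle point equations a_f(t) = (k(1−γ)/2, kγ/2, k(1−γ)/2)) has a critical point at γ = 1/2, i.e., ds/dγ|_{γ=1/2} = 0. -/

import Mathlib

/-- The exponent s(γ) = (1 − kα)(ln 2 + h(γ)) + α ln f(t₁(γ),t₂(γ),t₃(γ))
− r(1−γ)(ln t₁(γ) + ln t₃(γ)) − rγ ln t₂(γ), where (t₁,t₂,t₃) solves the saddle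
point equations a_f(t) = (k(1−γ)/2, kγ/2, k(1−γ)/2) and at γ = 1/2 equals
(x_k, x_k², x_k), has a critical point at γ = 1/2: ds/dγ|_{γ=1/2} = 0. -/
theorem stmt_18 (k r : ℕ) (hk : 3 ≤ k) (hr : 1 ≤ r) (α : ℝ) (hα : α = 2 * r / k)
    (f : ℝ → ℝ → ℝ → ℝ)
    (hf : ∀ x₁ x₂ x₃ : ℝ, f x₁ x₂ x₃
      = (1 + x₁ + x₂ + x₃) ^ k - (1 + x₁) ^ k - (1 + x₃) ^ k + 1)
    (t₁ t₂ t₃ : ℝ → ℝ)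
    (hpos : ∀ γ ∈ Set.Ioo (0:ℝ) 1, 0 < t₁ γ ∧ 0 < t₂ γ ∧ 0 < t₃ γ)
    (hdiff : ∀ γ ∈ Set.Ioo (0:ℝ) 1,
      DifferentiableAt ℝ t₁ γ ∧ DifferentiableAt ℝ t₂ γ ∧ DifferentiableAt ℝ t₃ γ)
    (hfpos : ∀ γ ∈ Set.Ioo (0:ℝ) 1, 0 < f (t₁ γ) (t₂ γ) (t₃ γ))
    (hsaddle : ∀ γ ∈ Set.Ioo (0:ℝ) 1,
      t₁ γ * deriv (fun x => f x (t₂ γ) (t₃ γ)) (t₁ γ) / f (t₁ γ) (t₂ γ) (t₃ γ)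
          = (k : ℝ) * (1 - γ) / 2 ∧
      t₂ γ * deriv (fun x => f (t₁ γ) x (t₃ γ)) (t₂ γ) / f (t₁ γ) (t₂ γ) (t₃ γ)
          = (k : ℝ) * γ / 2 ∧
      t₃ γ * deriv (fun x => f (t₁ γ) (t₂ γ) x) (t₃ γ) / f (t₁ γ) (t₂ γ) (t₃ γ)
          = (k : ℝ) * (1 - γ) / 2)
    (xk : ℝ) (hxk : 0 < xk)
    (thalf : t₁ (1/2) = xk ∧ t₂ (1/2) = xk ^ 2 ∧ t₃ (1/2) = xk)
    (s : ℝ → ℝ)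
    (hs : ∀ γ : ℝ, s γ
      = (1 - k * α) * (Real.log 2 + (-γ * Real.log γ - (1 - γ) * Real.log (1 - γ)))
        + α * Real.log (f (t₁ γ) (t₂ γ) (t₃ γ))
        - r * (1 - γ) * (Real.log (t₁ γ) + Real.log (t₃ γ))
        - r * γ * Real.log (t₂ γ)) :
    deriv s (1/2) = 0 := by
  have hhalf : (1/2 : ℝ) ∈ Set.Ioo (0:ℝ) 1 := by norm_num
  obtain ⟨ha, hb, hc⟩ := hpos _ hhalf
  obtain ⟨hd1, hd2, hd3⟩ := hdiff _ hhalf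
  obtain ⟨ht1, ht2, ht3⟩ := thalf
  obtain ⟨hs1, hs2, hs3⟩ := hsaddle _ hhalf
  set a := t₁ (1/2) with hadef
  set b := t₂ (1/2) with hbdef
  set c := t₃ (1/2) with hcdef
  set d1 := deriv t₁ (1/2) with hd1def
  set d2 := deriv t₂ (1/2) with hd2def
  set d3 := deriv t₃ (1/2) with hd3def
  have hD1 : HasDerivAt t₁ d1 (1/2) := hd1.hasDerivAt
  have hD2 : HasDerivAt t₂ d2 (1/2) := hd2.hasDerivAt
  have hD3 : HasDerivAt t₃ d3 (1/2) := hd3.hasDerivAt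
  have hk0 : (k:ℝ) ≠ 0 := Nat.cast_ne_zero.mpr (by omega)
  have hF0 : (0:ℝ) < (1 + a + b + c)^k - (1+a)^k - (1+c)^k + 1 := by
    have := hfpos _ hhalf; rwa [hf] at this
  -- partial derivatives of f
  have hP1 : deriv (fun x => f x b c) a
      = (k:ℝ)*(1+a+b+c)^(k-1) - (k:ℝ)*(1+a)^(k-1) := by
    have hfun : (fun x => f x b c) = fun x => (1+x+b+c)^k - (1+x)^k - (1+c)^k + 1 := by
      funext x; rw [hf]
    rw [hfun]
    have h1 : HasDerivAt (fun x : ℝ => (1+x+b+c)^k) ((k:ℝ)*(1+a+b+c)^(k-1)*1) a :=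
      ((((hasDerivAt_id a).const_add 1).add_const b).add_const c).pow k
    have h2 : HasDerivAt (fun x : ℝ => (1+x)^k) ((k:ℝ)*(1+a)^(k-1)*1) a :=
      ((hasDerivAt_id a).const_add 1).pow k
    erw [(((h1.sub h2).sub_const ((1+c)^k)).add_const 1).deriv]; ring
  have hP2 : deriv (fun x => f a x c) b = (k:ℝ)*(1+a+b+c)^(k-1) := by
    have hfun : (fun x => f a x c) = fun x => (1+a+x+c)^k - (1+a)^k - (1+c)^k + 1 := by
      funext x; rw [hf]
    rw [hfun]
    have h1 : HasDerivAt (fun x : ℝ => (1+a+x+c)^k) ((k:ℝ)*(1+a+b+c)^(k-1)*1) b :=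
      (((hasDerivAt_id b).const_add (1+a)).add_const c).pow k
    rw [(((h1.sub_const ((1+a)^k)).sub_const ((1+c)^k)).add_const 1).deriv]; ring
  have hP3 : deriv (fun x => f a b x) c
      = (k:ℝ)*(1+a+b+c)^(k-1) - (k:ℝ)*(1+c)^(k-1) := by
    have hfun : (fun x => f a b x) = fun x => (1+a+b+x)^k - (1+a)^k - (1+x)^k + 1 := by
      funext x; rw [hf]
    rw [hfun]
    have h1 : HasDerivAt (fun x : ℝ => (1+a+b+x)^k) ((k:ℝ)*(1+a+b+c)^(k-1)*1) c :=
      ((hasDerivAt_id c).const_add (1+a+b)).pow k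
    have h2 : HasDerivAt (fun x : ℝ => (1+x)^k) ((k:ℝ)*(1+c)^(k-1)*1) c :=
      ((hasDerivAt_id c).const_add 1).pow k
    erw [(((h1.sub_const ((1+a)^k)).sub h2).add_const 1).deriv]; ring
  -- clean saddle equations
  rw [hP1, hf] at hs1
  rw [hP2, hf] at hs2
  rw [hP3, hf] at hs3
  rw [div_eq_iff hF0.ne'] at hs1 hs2 hs3
  -- derivative of the entropy part
  have hent : HasDerivAt (fun γ : ℝ =>
      Real.log 2 + (-γ * Real.log γ - (1-γ) * Real.log (1-γ))) 0 (1/2) := by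
    have hA : HasDerivAt (fun γ : ℝ => γ * Real.log γ) (Real.log (1/2) + 1) (1/2) :=
      Real.hasDerivAt_mul_log (by norm_num)
    have hB0 : HasDerivAt (fun γ : ℝ => 1 - γ) (-1) (1/2) := by
      simpa using (hasDerivAt_id (1/2 : ℝ)).const_sub 1
    have hB : HasDerivAt (fun γ : ℝ => (1-γ) * Real.log (1-γ))
        ((Real.log (1 - 1/2) + 1) * (-1)) (1/2) :=
      (Real.hasDerivAt_mul_log (x := (1:ℝ) - 1/2) (by norm_num)).comp (1/2) hB0
    have hfun : (fun γ : ℝ => Real.log 2 + (-γ * Real.log γ - (1-γ)*Real.log (1-γ)))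
        = fun γ : ℝ => Real.log 2 + (-(γ * Real.log γ) - (1-γ)*Real.log (1-γ)) := by
      funext γ; ring
    rw [hfun]
    have := (hA.neg.sub hB).const_add (Real.log 2)
    convert this using 1
    norm_num
    rfl
    rfl
    rfl
    rw [show (1:ℝ) - 1/2 = 1/2 by norm_num]; ring
  have h1 := hent.const_mul (1 - (k:ℝ) * α)
  -- derivative of the log f part
  have hSum : HasDerivAt (fun γ => 1 + t₁ γ + t₂ γ + t₃ γ) (d1 + d2 + d3) (1/2) :=
    ((hD1.const_add 1).add hD2).add hD3
  have hF : HasDerivAt (fun γ => (1 + t₁ γ + t₂ γ + t₃ γ)^k - (1 + t₁ γ)^k - (1 + t₃ γ)^k + 1)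
      (((k:ℝ)*(1+a+b+c)^(k-1)*(d1+d2+d3) - (k:ℝ)*(1+a)^(k-1)*d1) - (k:ℝ)*(1+c)^(k-1)*d3) (1/2) := by
    have hx1 : HasDerivAt (fun γ => (1 + t₁ γ + t₂ γ + t₃ γ)^k)
        ((k:ℝ)*(1+a+b+c)^(k-1)*(d1+d2+d3)) (1/2) := hSum.pow k
    have hx2 : HasDerivAt (fun γ => (1 + t₁ γ)^k) ((k:ℝ)*(1+a)^(k-1)*d1) (1/2) :=
      (hD1.const_add 1).pow k
    have hx3 : HasDerivAt (fun γ => (1 + t₃ γ)^k) ((k:ℝ)*(1+c)^(k-1)*d3) (1/2) :=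
      (hD3.const_add 1).pow k
    exact ((hx1.sub hx2).sub hx3).add_const 1
  have h2 := (hF.log hF0.ne').const_mul α
  -- derivative of the remaining parts
  have hB0 : HasDerivAt (fun γ : ℝ => 1 - γ) (-1) (1/2) := by
    simpa using (hasDerivAt_id (1/2 : ℝ)).const_sub 1
  have h3 := (hB0.const_mul (r:ℝ)).mul ((hD1.log ha.ne').add (hD3.log hc.ne'))
  have h4 := ((hasDerivAt_id' (1/2:ℝ)).const_mul (r:ℝ)).mul (hD2.log hb.ne')
  have hder := ((h1.add h2).sub h3).sub h4
  have hsfun : s = fun γ =>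
      (1 - (k:ℝ) * α) * (Real.log 2 + (-γ * Real.log γ - (1 - γ) * Real.log (1 - γ)))
        + α * Real.log ((1 + t₁ γ + t₂ γ + t₃ γ)^k - (1 + t₁ γ)^k - (1 + t₃ γ)^k + 1)
        - (r:ℝ) * (1 - γ) * (Real.log (t₁ γ) + Real.log (t₃ γ))
        - (r:ℝ) * γ * Real.log (t₂ γ) := by
    funext γ; rw [hs, hf]
  erw [hsfun, hder.deriv]
  simp only [Pi.add_apply]
  rw [ht1, ht2, ht3, hadef.symm.trans ht1, hbdef.symm.trans ht2, hcdef.symm.trans ht3, hα, Real.log_pow]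
  rw [ht1, ht2, ht3] at hs1 hs2 hs3 hF0
  have hxne : xk ≠ 0 := hxk.ne'
  set E := ((k:ℝ)*(1+xk+xk^2+xk)^(k-1)) with hE
  set G := ((k:ℝ)*(1+xk)^(k-1)) with hG
  set F := ((1+xk+xk^2+xk)^k - (1+xk)^k - (1+xk)^k + 1) with hFdef
  field_simp
  linear_combination (4*(r:ℝ)*xk*(d1+d3)) * hs1 + (4*(r:ℝ)*d2) * hs2
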